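/- Let σ : ℝ → ℝ be the logistic sigmoid σ(x) = 1/(1 + exp(−x)). Let z_1, …, z_M index target samples, and for each j let g_j : ℝ → ℝ be differentiable at θ with |g_j'(θ)| ≤ A and |g_j(θ)| ≥ ρ ≥ 0, and let c_j ∈ ℝ be the student prediction on sample j. Let λ ≥ 0 and define the student regularizer R(θ) = λ · (1/M) · Σ_{j=1}^{M} (σ(g_j(θ)) − c_j)². Then R is differentiable at θ and |R'(θ)| ≤ 2λ · ((1/M) · Σ_{j=1}^{M} |σ(g_j(θ)) − c_j|) · A · exp(−ρ). -/

import Mathlib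

lemma sig_hasDerivAt (x : ℝ) :
    HasDerivAt (fun x : ℝ => 1 / (1 + Real.exp (-x)))
      (Real.exp (-x) / (1 + Real.exp (-x)) ^ 2) x := by
  have hd : (1 : ℝ) + Real.exp (-x) ≠ 0 := by positivity
  have h1 : HasDerivAt (fun x : ℝ => -x) (-1) x := (hasDerivAt_id x).neg
  have h2 : HasDerivAt (fun x : ℝ => Real.exp (-x)) (Real.exp (-x) * -1) x := h1.exp
  have h3 : HasDerivAt (fun x : ℝ => 1 + Real.exp (-x)) (Real.exp (-x) * -1) x :=
    h2.const_add 1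
  have h4 := h3.fun_inv hd
  have : -(Real.exp (-x) * -1) / (1 + Real.exp (-x)) ^ 2
      = Real.exp (-x) / (1 + Real.exp (-x)) ^ 2 := by ring
  rw [this] at h4
  simpa [one_div] using h4

lemma sig_deriv_le (x ρ : ℝ) (hρ0 : 0 ≤ ρ) (hρ : ρ ≤ |x|) :
    Real.exp (-x) / (1 + Real.exp (-x)) ^ 2 ≤ Real.exp (-ρ) := by
  rcases le_or_gt 0 x with hx | hx
  · have hxa : |x| = x := abs_of_nonneg hx
    have h1 : Real.exp (-x) / (1 + Real.exp (-x)) ^ 2 ≤ Real.exp (-x) := by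
      apply div_le_self (Real.exp_pos _).le
      nlinarith [Real.exp_pos (-x)]
    have h2 : Real.exp (-x) ≤ Real.exp (-ρ) := by
      apply Real.exp_le_exp.2; linarith [hxa ▸ hρ]
    linarith
  · have hxa : |x| = -x := abs_of_neg hx
    have h1 : Real.exp (-x) / (1 + Real.exp (-x)) ^ 2 ≤ Real.exp x := by
      rw [div_le_iff₀ (by positivity)]
      have he : Real.exp x * Real.exp (-x) = 1 := by
        rw [← Real.exp_add]; simp
      nlinarith [Real.exp_pos x, Real.exp_pos (-x)]
    have h2 : Real.exp x ≤ Real.exp (-ρ) := by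
      apply Real.exp_le_exp.2; linarith [hxa ▸ hρ]
    linarith

/-- Target-term bound of Lemma 1: with `σ` the logistic sigmoid, `M` target
samples with logits `g j` differentiable at `θ`, `|deriv (g j) θ| ≤ A`,
margins `|g j θ| ≥ ρ ≥ 0`, fixed student predictions `c j`, and `λ ≥ 0`, the
student regularizer `R θ = λ * ((1/M) * ∑ j, (σ (g j θ) - c j)^2)` is
differentiable at `θ` and
`|R' θ| ≤ 2λ * ((1/M) * ∑ j, |σ (g j θ) - c j|) * A * exp (-ρ)`. -/
theorem student_regularizer_deriv_bound (σ : ℝ → ℝ)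
    (hσ : ∀ x : ℝ, σ x = 1 / (1 + Real.exp (-x)))
    (M : ℕ) (hM : 0 < M) (g : Fin M → ℝ → ℝ) (c : Fin M → ℝ)
    (θ A ρ lam : ℝ)
    (hg : ∀ j, DifferentiableAt ℝ (g j) θ)
    (hA : ∀ j, |deriv (g j) θ| ≤ A)
    (hρ0 : 0 ≤ ρ) (hρ : ∀ j, ρ ≤ |g j θ|)
    (hlam : 0 ≤ lam) :
    DifferentiableAt ℝ
        (fun t => lam * ((1 / (M : ℝ)) * ∑ j, (σ (g j t) - c j) ^ 2)) θ ∧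
      |deriv (fun t => lam * ((1 / (M : ℝ)) * ∑ j, (σ (g j t) - c j) ^ 2)) θ| ≤
        2 * lam * ((1 / (M : ℝ)) * ∑ j, |σ (g j θ) - c j|) * A *
          Real.exp (-ρ) := by
  have hσeq : σ = fun x : ℝ => 1 / (1 + Real.exp (-x)) := funext hσ
  subst hσeq
  set s : ℝ → ℝ := fun x : ℝ => 1 / (1 + Real.exp (-x)) with hs
  set s' : ℝ → ℝ := fun x : ℝ => Real.exp (-x) / (1 + Real.exp (-x)) ^ 2 with hs'
  have hA0 : 0 ≤ A := le_trans (abs_nonneg _) (hA ⟨0, hM⟩)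
  -- derivative of each term
  have hterm : ∀ j : Fin M, HasDerivAt (fun t => (s (g j t) - c j) ^ 2)
      (2 * (s (g j θ) - c j) ^ 1 * (s' (g j θ) * deriv (g j) θ)) θ := by
    intro j
    have h1 : HasDerivAt (fun t => s (g j t)) (s' (g j θ) * deriv (g j) θ) θ :=
      (sig_hasDerivAt (g j θ)).comp θ (hg j).hasDerivAt
    simpa using ((h1.sub_const (c j)).fun_pow 2)
  have hsum : HasDerivAt (fun t => ∑ j, (s (g j t) - c j) ^ 2)
      (∑ j, 2 * (s (g j θ) - c j) ^ 1 * (s' (g j θ) * deriv (g j) θ)) θ :=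
    HasDerivAt.fun_sum fun j _ => hterm j
  have hR : HasDerivAt (fun t => lam * ((1 / (M : ℝ)) * ∑ j, (s (g j t) - c j) ^ 2))
      (lam * ((1 / (M : ℝ)) * ∑ j, 2 * (s (g j θ) - c j) ^ 1 * (s' (g j θ) * deriv (g j) θ))) θ :=
    (hsum.const_mul ((1 : ℝ) / M)).const_mul lam
  refine ⟨hR.differentiableAt, ?_⟩
  rw [hR.deriv]
  have hMpos : (0 : ℝ) < M := by exact_mod_cast hM
  -- per-term bound
  have hbound : ∀ j : Fin M,
      |2 * (s (g j θ) - c j) ^ 1 * (s' (g j θ) * deriv (g j) θ)| ≤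
        (2 * A * Real.exp (-ρ)) * |s (g j θ) - c j| := by
    intro j
    have hsp : 0 < s' (g j θ) := by
      simp only [hs']; positivity
    have h1 : s' (g j θ) ≤ Real.exp (-ρ) := sig_deriv_le _ _ hρ0 (hρ j)
    have h2 : |deriv (g j) θ| ≤ A := hA j
    have heq : |2 * (s (g j θ) - c j) ^ 1 * (s' (g j θ) * deriv (g j) θ)| =
        2 * |s (g j θ) - c j| * (s' (g j θ) * |deriv (g j) θ|) := by
      rw [abs_mul, abs_mul, abs_mul, abs_of_pos hsp]
      simp [abs_mul]
    rw [heq]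
    have h3 : s' (g j θ) * |deriv (g j) θ| ≤ Real.exp (-ρ) * A :=
      mul_le_mul h1 h2 (abs_nonneg _) (Real.exp_pos _).le
    nlinarith [abs_nonneg (s (g j θ) - c j)]
  calc |lam * ((1 / (M : ℝ)) * ∑ j, 2 * (s (g j θ) - c j) ^ 1 * (s' (g j θ) * deriv (g j) θ))|
      = lam * ((1 / (M : ℝ)) *
          |∑ j, 2 * (s (g j θ) - c j) ^ 1 * (s' (g j θ) * deriv (g j) θ)|) := by
        rw [abs_mul, abs_mul, abs_of_nonneg hlam, abs_of_nonneg (by positivity : (0:ℝ) ≤ 1 / (M:ℝ))]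
    _ ≤ lam * ((1 / (M : ℝ)) *
          ∑ j, |2 * (s (g j θ) - c j) ^ 1 * (s' (g j θ) * deriv (g j) θ)|) := by
        gcongr
        exact Finset.abs_sum_le_sum_abs _ _
    _ ≤ lam * ((1 / (M : ℝ)) * ∑ j, (2 * A * Real.exp (-ρ)) * |s (g j θ) - c j|) := by
        gcongr with j
        exact hbound j
    _ = 2 * lam * ((1 / (M : ℝ)) * ∑ j, |s (g j θ) - c j|) * A * Real.exp (-ρ) := by
        rw [← Finset.mul_sum]; ring
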